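/- Let G be a graph with a cycle C, let G − V(C) have a unique component H, and suppose C is a longest cycle with this property among cycles leaving components of order at most |V(H)|. Suppose every vertex of C not in W = N_C(V(H)) has more than n/(t+1) + t − 1 neighbors on C, where G is t-tough with t > 1, H is complete, and no D_{|V(H)|}-cycle exists in G. Then for any two distinct vertices u, v ∈ W, the distance from u to v along the cycle (in either direction) is at least t + 3. -/

import Mathlib

open SimpleGraph

/-- The number of components of `G − S`. -/
noncomputable def numComp {V : Type*} (G : SimpleGraph V) (S : Set V) : ℕ :=
  Nat.card ((G.induce Sᶜ).ConnectedComponent)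

/-- `G` is `t`-tough: `|S| ≥ t · c(G − S)` for every `S` with `c(G − S) ≥ 2`. -/
def Tough {V : Type*} [Fintype V] (t : ℝ) (G : SimpleGraph V) : Prop :=
  ∀ S : Finset V, 2 ≤ numComp G ↑S → t * (numComp G ↑S : ℝ) ≤ (S.card : ℝ)

/-- A `D_λ`-cycle: a cycle such that every component of `G − V(C)` has order
less than `λ`. -/
def IsDCycle {V : Type*} (G : SimpleGraph V) (lam : ℕ) {u : V} (c : G.Walk u u) : Prop :=
  c.IsCycle ∧
    ∀ K : (G.induce {x | x ∉ c.support}).ConnectedComponent, Nat.card K.supp < lam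

/-- `c_λ(G − V(C))`: the number of components of `G − V(C)` of order at least `λ`. -/
noncomputable def bigComps {V : Type*} (G : SimpleGraph V) (lam : ℕ) {u : V}
    (c : G.Walk u u) : ℕ :=
  Nat.card {K : (G.induce {x | x ∉ c.support}).ConnectedComponent //
    lam ≤ Nat.card K.supp}

/-- The distance from `x` to `y` along the oriented cycle `c`. -/
def cycDist {V : Type*} [DecidableEq V] {G : SimpleGraph V} {u : V}
    (c : G.Walk u u) (x y : V) : ℕ :=
  (c.support.idxOf y + c.length - c.support.idxOf x) % c.length



set_option linter.unusedSectionVars false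

namespace ClaimAux

theorem List.getLast_eq_get {α : Type*} (l : List α) (h : l ≠ []) :
    l.getLast h = l.get ⟨l.length - 1, by have := List.length_pos_iff.mpr h; omega⟩ := by
  rw [_root_.List.getLast_eq_getElem]; rfl
theorem List.get_take {α : Type*} (L : List α) {i j : ℕ} (hi : i < L.length) (hj : i < j) :
    L.get ⟨i, hi⟩ = (L.take j).get ⟨i, by rw [_root_.List.length_take]; omega⟩ := by
  simp
theorem List.get_drop {α : Type*} (L : List α) {i j : ℕ} (h : i + j < L.length) :
    L.get ⟨i + j, h⟩ = (L.drop i).get ⟨j, by rw [_root_.List.length_drop]; omega⟩ := by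
  simp
theorem List.getLast_append' {α : Type*} (l₁ l₂ : List α) (h : l₂ ≠ []) :
    (l₁ ++ l₂).getLast (by simp [h]) = l₂.getLast h := by
  simp [h]
theorem List.Chain'.imp {α : Type*} {R S : α → α → Prop} (H : ∀ a b, R a b → S a b) {l : List α}
    (p : _root_.List.IsChain R l) : _root_.List.IsChain S l := p.imp (fun a b h => H a b h)

variable {V : Type*} [DecidableEq V] {G : SimpleGraph V}

lemma get_idx_congr (l : List V) {i j : ℕ} (h : i = j) (hi : i < l.length) :
    l.get ⟨i, hi⟩ = l.get ⟨j, h ▸ hi⟩ := by subst h; rfl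

lemma head_eq_get (l : List V) (h : l ≠ []) :
    l.head h = l.get ⟨0, List.length_pos_iff.mpr h⟩ := by
  rcases l with _ | ⟨a, l⟩
  · exact absurd rfl h
  · rfl

/-- A "cyclic list": vertices of a cycle in order. -/
structure CycL (G : SimpleGraph V) (l : List V) : Prop where
  nodup : l.Nodup
  three : 3 ≤ l.length
  chain : l.Chain' G.Adj
  wrap : ∀ (h : l ≠ []), G.Adj (l.getLast h) (l.head h)

lemma CycL.ne_nil {l : List V} (hl : CycL G l) : l ≠ [] := by
  have := hl.three; intro h; subst h; simp at this

lemma CycL.pos {l : List V} (hl : CycL G l) : 0 < l.length := by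
  have := hl.three; omega

lemma CycL.get_adj {l : List V} (hl : CycL G l) (i : ℕ) (h : i < l.length) :
    G.Adj (l.get ⟨i, h⟩) (l.get ⟨(i+1) % l.length, Nat.mod_lt _ (by omega)⟩) := by
  rcases Nat.lt_or_ge (i+1) l.length with h2 | h2
  · have e : (i+1) % l.length = i + 1 := Nat.mod_eq_of_lt h2
    have := List.isChain_iff_getElem.mp hl.chain i (by omega)
    rw [get_idx_congr l e]
    simpa using this
  · have e : (i+1) % l.length = 0 := by
      have : i + 1 = l.length := by omega
      simp [this]
    have hw := hl.wrap hl.ne_nil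
    rw [List.getLast_eq_get, head_eq_get] at hw
    rw [get_idx_congr l e, get_idx_congr l (show i = l.length - 1 by omega)]
    exact hw

lemma cycL_of_get {l : List V} (hnd : l.Nodup) (h3 : 3 ≤ l.length)
    (hadj : ∀ i (h : i < l.length),
      G.Adj (l.get ⟨i, h⟩) (l.get ⟨(i+1) % l.length, Nat.mod_lt _ (by omega)⟩)) :
    CycL G l := by
  have hne : l ≠ [] := by intro h; subst h; simp at h3
  refine ⟨hnd, h3, ?_, ?_⟩
  · rw [List.Chain', List.isChain_iff_getElem]
    intro i hi
    have h2 := hadj i (by omega)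
    rwa [get_idx_congr l (show (i+1) % l.length = i+1 from Nat.mod_eq_of_lt (by omega))] at h2
  · intro h
    have h2 := hadj (l.length - 1) (by omega)
    have e : (l.length - 1 + 1) % l.length = 0 := by
      have : l.length - 1 + 1 = l.length := by omega
      simp [this]
    rw [get_idx_congr l e] at h2
    rw [List.getLast_eq_get, head_eq_get]
    exact h2

lemma CycL.rotate {l : List V} (hl : CycL G l) (n : ℕ) : CycL G (l.rotate n) := by
  have hpos := hl.pos
  have h3 := hl.three
  have hlen : (l.rotate n).length = l.length := List.length_rotate l n
  refine cycL_of_get (List.nodup_rotate.mpr hl.nodup) (by omega) ?_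
  intro i hi
  rw [List.get_rotate, List.get_rotate]
  have e : ((i + 1) % (l.rotate n).length + n) % l.length = ((i + n) % l.length + 1) % l.length := by
    rw [hlen, Nat.mod_add_mod, Nat.mod_add_mod]
    congr 1
    omega
  rw [get_idx_congr l e]
  exact hl.get_adj ((i + n) % l.length) (Nat.mod_lt _ hpos)


def ofChain : ∀ (l : List V) (hne : l ≠ []), l.Chain' G.Adj → G.Walk (l.head hne) (l.getLast hne)
  | [_], _, _ => Walk.nil
  | _ :: b :: rest, _, hc =>
      Walk.cons (List.isChain_cons_cons.mp hc).1 (ofChain (b :: rest) (by simp) (List.isChain_cons_cons.mp hc).2)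

lemma support_ofChain : ∀ (l : List V) (hne : l ≠ []) (hc : l.Chain' G.Adj),
    (ofChain l hne hc).support = l
  | [_], _, _ => rfl
  | _ :: b :: rest, _, hc => by
      rw [ofChain]
      exact congrArg (List.cons _) (support_ofChain _ _ _)

lemma edge_start {a b' : V} (p : G.Walk a b') (hnd : p.support.Nodup) {v : V}
    (he : s(a, v) ∈ p.edges) : p.support[1]? = some v := by
  induction p with
  | nil => simp at he
  | @cons u c w h q ih =>
    rw [Walk.edges_cons] at he
    rw [Walk.support_cons] at hnd
    rcases List.mem_cons.mp he with he | he
    · rcases Sym2.eq_iff.mp he with ⟨-, rfl⟩ | ⟨h1, rfl⟩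
      · rw [Walk.support_cons, q.support_eq_cons]
        rfl
      · exact absurd h1 h.ne
    · exfalso
      have : u ∈ q.support := Walk.fst_mem_support_of_mem_edges q he
      exact (List.nodup_cons.mp hnd).1 this

/-- Any cyclic list gives an honest cycle in the graph, with the same vertices. -/
lemma CycL.exists_cycle {l : List V} (hl : CycL G l) :
    ∃ (x : V) (w : G.Walk x x), w.IsCycle ∧ ∀ z, z ∈ w.support ↔ z ∈ l := by
  rcases l with _ | ⟨x, _ | ⟨b, rest⟩⟩
  · exact absurd rfl hl.ne_nil
  · exfalso; have := hl.three; simp at this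
  have h3 := hl.three
  have hrest : rest ≠ [] := by
    intro h; subst h; simp at h3
  have hnd := hl.nodup
  have hxnot : x ∉ b :: rest := (List.nodup_cons.mp hnd).1
  have hbr : (b :: rest).Nodup := (List.nodup_cons.mp hnd).2
  -- the list for the path part
  have hchain2 : (b :: (rest ++ [x])).Chain' G.Adj := by
    have : ((b :: rest) ++ [x]).Chain' G.Adj := by
      rw [List.Chain', List.isChain_append]
      refine ⟨(List.isChain_cons_cons.mp hl.chain).2, List.isChain_singleton x, ?_⟩
      intro y hy z hz
      simp only [List.head?_cons, Option.mem_def, Option.some.injEq] at hz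
      rw [List.getLast?_eq_getLast (by simp)] at hy
      simp only [Option.mem_def, Option.some.injEq] at hy
      subst hy; subst hz
      have := hl.wrap (by simp)
      rwa [show ((x :: b :: rest).getLast (by simp)) = ((b :: rest).getLast (by simp)) from List.getLast_cons _] at this
    simpa using this
  have hne2 : (b :: (rest ++ [x])) ≠ [] := by simp
  set l2 := b :: (rest ++ [x]) with hl2
  have hlast : l2.getLast hne2 = x := List.getLast_concat (a := x) (l := b :: rest)
  have hhead : l2.head hne2 = b := rfl
  have hadj : G.Adj x b := (List.isChain_cons_cons.mp hl.chain).1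
  let p : G.Walk b x := (ofChain l2 hne2 hchain2).copy hhead hlast
  have hsupp : p.support = l2 := by
    show ((ofChain l2 hne2 hchain2).copy hhead hlast).support = l2
    rw [Walk.support_copy]
    exact support_ofChain _ _ _
  have hsuppnd : p.support.Nodup := by
    rw [hsupp, hl2]
    rw [show b :: (rest ++ [x]) = (b :: rest) ++ [x] from rfl]
    rw [List.nodup_append']
    exact ⟨hbr, List.nodup_singleton x, by
      intro a ha hax
      simp only [List.mem_singleton] at hax
      subst hax
      exact hxnot ha⟩
  refine ⟨x, Walk.cons hadj p, ?_, ?_⟩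
  · rw [Walk.cons_isCycle_iff]
    refine ⟨Walk.IsPath.mk' hsuppnd, ?_⟩
    intro hmem
    rw [Sym2.eq_swap] at hmem
    have := edge_start p hsuppnd hmem
    rw [hsupp, hl2] at this
    rcases rest with _ | ⟨r0, rest'⟩
    · exact absurd rfl hrest
    · simp only [List.cons_append] at this
      have : r0 = x := by simpa using this
      subst this
      exact hxnot (by simp)
  · intro z
    rw [Walk.support_cons, hsupp, hl2]
    simp only [List.mem_cons, List.mem_append, List.mem_singleton]
    tauto
end ClaimAux
section P4
open SimpleGraph
namespace ClaimAux
variable {V : Type*} [DecidableEq V] {G : SimpleGraph V}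

lemma mod_succ_inj {len i j : ℕ} (hi : i < len) (hj : j < len)
    (e : (i+1) % len = (j+1) % len) : i = j := by
  rcases Nat.lt_or_ge (i+1) len with h1 | h1
  · rw [Nat.mod_eq_of_lt h1] at e
    rcases Nat.lt_or_ge (j+1) len with h2 | h2
    · rw [Nat.mod_eq_of_lt h2] at e; omega
    · have : j + 1 = len := by omega
      rw [this, Nat.mod_self] at e; omega
  · have : i + 1 = len := by omega
    rw [this, Nat.mod_self] at e
    rcases Nat.lt_or_ge (j+1) len with h2 | h2
    · rw [Nat.mod_eq_of_lt h2] at e; omega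
    · have h4 : j + 1 = len := by omega
      omega

/-- The successor of `a` in the cyclic order of `l`. -/
def csucc (l : List V) (a : V) : V := l.getD ((l.idxOf a + 1) % l.length) a

lemma csucc_eq_get {l : List V} {a : V} (h : a ∈ l) :
    csucc l a = l.get ⟨(l.idxOf a + 1) % l.length,
      Nat.mod_lt _ (List.length_pos_iff.mpr (List.ne_nil_of_mem h))⟩ := by
  unfold csucc; exact List.getD_eq_get l a ⟨_, _⟩

lemma csucc_mem {l : List V} {a : V} (h : a ∈ l) : csucc l a ∈ l := by
  rw [csucc_eq_get h]; exact List.get_mem _ _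

lemma CycL.adj_csucc {l : List V} (hl : CycL G l) {a : V} (h : a ∈ l) :
    G.Adj a (csucc l a) := by
  rw [csucc_eq_get h]
  have hidx : l.idxOf a < l.length := List.idxOf_lt_length_iff.mpr h
  have := hl.get_adj (l.idxOf a) hidx
  rwa [List.idxOf_get] at this

lemma csucc_injOn {l : List V} (hnd : l.Nodup) {a b : V} (ha : a ∈ l) (hb : b ∈ l)
    (h : csucc l a = csucc l b) : a = b := by
  rw [csucc_eq_get ha, csucc_eq_get hb] at h
  have hinj := List.nodup_iff_injective_get.mp hnd
  have := hinj h
  have h2 : (l.idxOf a + 1) % l.length = (l.idxOf b + 1) % l.length :=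
    congrArg Fin.val this
  have h3 := mod_succ_inj (List.idxOf_lt_length_iff.mpr ha) (List.idxOf_lt_length_iff.mpr hb) h2
  have e1 := List.idxOf_get (List.idxOf_lt_length_iff.mpr ha)
  have e2 := List.idxOf_get (List.idxOf_lt_length_iff.mpr hb)
  rw [← e1, ← e2]
  exact get_idx_congr l h3 _

lemma rot_head {l : List V} (n : ℕ) (hpos : 0 < l.length) (h : l.rotate n ≠ []) :
    (l.rotate n).head h = l.get ⟨n % l.length, Nat.mod_lt _ hpos⟩ := by
  rw [head_eq_get, List.get_rotate]
  apply get_idx_congr l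
  simp only [Fin.val_mk]
  rw [Nat.zero_add]

lemma rot_last {l : List V} (n : ℕ) (hpos : 0 < l.length) (h : l.rotate n ≠ []) :
    (l.rotate n).getLast h = l.get ⟨(l.length - 1 + n) % l.length, Nat.mod_lt _ hpos⟩ := by
  rw [List.getLast_eq_get, List.get_rotate]
  apply get_idx_congr l
  simp only [Fin.val_mk]
  rw [List.length_rotate]

lemma rotate_ne_nil {l : List V} (n : ℕ) (h : l ≠ []) : l.rotate n ≠ [] := by
  intro hc
  have := List.length_rotate l n
  rw [hc] at this
  simp at this
  exact h (List.length_eq_zero_iff.mp this.symm)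

/-- Insert a path `π` between `a` and its cyclic successor. -/
lemma CycL.surgeryI {M : List V} (hM : CycL G M) {a : V} (ha : a ∈ M)
    (π : List V) (hπne : π ≠ []) (hπnd : π.Nodup) (hπch : π.Chain' G.Adj)
    (hdisj : ∀ z ∈ π, z ∉ M)
    (h1 : G.Adj a (π.head hπne)) (h2 : G.Adj (π.getLast hπne) (csucc M a)) :
    ∃ M' : List V, CycL G M' ∧ ∀ z, z ∈ M' ↔ (z ∈ M ∨ z ∈ π) := by
  have hpos := hM.pos
  have hia : M.idxOf a < M.length := List.idxOf_lt_length_iff.mpr ha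
  have hRne : M.rotate (M.idxOf a + 1) ≠ [] := rotate_ne_nil _ hM.ne_nil
  have hRcyc : CycL G (M.rotate (M.idxOf a + 1)) := hM.rotate _
  have hRhead : (M.rotate (M.idxOf a + 1)).head hRne = csucc M a := by
    rw [rot_head _ hpos, csucc_eq_get ha]
  have hRlast : (M.rotate (M.idxOf a + 1)).getLast hRne = a := by
    rw [rot_last _ hpos]
    have e : (M.length - 1 + (M.idxOf a + 1)) % M.length = M.idxOf a := by
      have : M.length - 1 + (M.idxOf a + 1) = M.idxOf a + M.length := by omega
      rw [this, Nat.add_mod_right]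
      exact Nat.mod_eq_of_lt hia
    rw [get_idx_congr M e]
    exact List.idxOf_get hia
  refine ⟨M.rotate (M.idxOf a + 1) ++ π, ?_, ?_⟩
  · refine ⟨?_, ?_, ?_, ?_⟩
    · rw [List.nodup_append']
      exact ⟨hRcyc.nodup, hπnd, fun z hz hz2 => hdisj z hz2 (List.mem_rotate.mp hz)⟩
    · have : 3 ≤ (M.rotate (M.idxOf a + 1)).length := hRcyc.three
      rw [List.length_append]; omega
    · rw [List.Chain', List.isChain_append]
      refine ⟨hRcyc.chain, hπch, ?_⟩
      intro x hx y hy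
      rw [List.getLast?_eq_getLast hRne] at hx
      rw [List.head?_eq_head hπne] at hy
      simp only [Option.mem_def, Option.some.injEq] at hx hy
      subst hx; subst hy
      rw [hRlast]
      exact h1
    · intro h
      rw [List.getLast_append' _ π hπne, List.head_append]
      simp only [List.isEmpty_iff]
      rw [dif_neg hRne]
      rw [hRhead]
      exact h2
  · intro z
    rw [List.mem_append, List.mem_rotate]

end ClaimAux
end P4
section P5
open SimpleGraph
namespace ClaimAux
variable {V : Type*} [DecidableEq V] {G : SimpleGraph V}

lemma take_head {l : List V} {n : ℕ} (h : l ≠ []) (h2 : l.take n ≠ []) :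
    (l.take n).head h2 = l.head h := by
  have hn : 0 < n := by
    rcases Nat.eq_zero_or_pos n with h0 | h0
    · subst h0; simp at h2
    · exact h0
  rw [head_eq_get, head_eq_get]
  exact (List.get_take l (List.length_pos_iff.mpr h) hn).symm

lemma take_last {l : List V} {n : ℕ} (hn : n ≤ l.length) (hpos : 0 < n)
    (h2 : l.take n ≠ []) :
    (l.take n).getLast h2 = l.get ⟨n - 1, by omega⟩ := by
  rw [List.getLast_eq_get]
  have e : (l.take n).length - 1 = n - 1 := by
    rw [List.length_take]; omega
  rw [get_idx_congr _ e]
  exact (List.get_take l (by omega) (by omega)).symm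

lemma drop_head {l : List V} {n : ℕ} (hn : n < l.length) (h2 : l.drop n ≠ []) :
    (l.drop n).head h2 = l.get ⟨n, hn⟩ := by
  rw [head_eq_get]
  have := List.get_drop l (i := n) (j := 0) (by omega)
  rw [← this]
  exact (get_idx_congr _ (by omega) _).symm

lemma drop_last {l : List V} {n : ℕ} (hn : n < l.length) (h : l ≠ []) (h2 : l.drop n ≠ []) :
    (l.drop n).getLast h2 = l.getLast h := by
  rw [List.getLast_eq_get, List.getLast_eq_get]
  have e : (l.drop n).length - 1 = l.length - n - 1 := by
    rw [List.length_drop]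
  rw [get_idx_congr _ e]
  have := List.get_drop l (i := n) (j := l.length - n - 1) (by omega)
  rw [← this]
  exact (get_idx_congr _ (by omega) _).symm

/-- Crossing surgery: insert a path `π` using a crossing chord. -/
lemma CycL.surgeryII {M : List V} (hM : CycL G M) {a b : V} (ha : a ∈ M) (hb : b ∈ M)
    (hab : a ≠ b)
    (π : List V) (hπne : π ≠ []) (hπnd : π.Nodup) (hπch : π.Chain' G.Adj)
    (hdisj : ∀ z ∈ π, z ∉ M)
    (h1 : G.Adj a (π.head hπne)) (h2 : G.Adj (π.getLast hπne) b)
    (hchord : G.Adj (csucc M a) (csucc M b)) :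
    ∃ M' : List V, CycL G M' ∧ ∀ z, z ∈ M' ↔ (z ∈ M ∨ z ∈ π) := by
  have hpos := hM.pos
  have h3 := hM.three
  have hia : M.idxOf a < M.length := List.idxOf_lt_length_iff.mpr ha
  have hMne := hM.ne_nil
  have hRne : M.rotate (M.idxOf a + 1) ≠ [] := rotate_ne_nil _ hMne
  have hRcyc : CycL G (M.rotate (M.idxOf a + 1)) := hM.rotate _
  have hRnd : (M.rotate (M.idxOf a + 1)).Nodup := hRcyc.nodup
  have hRlen : (M.rotate (M.idxOf a + 1)).length = M.length := List.length_rotate _ _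
  have hbR : b ∈ M.rotate (M.idxOf a + 1) := List.mem_rotate.mpr hb
  obtain ⟨j, hjR, hgetb⟩ : ∃ j, ∃ (hj : j < (M.rotate (M.idxOf a + 1)).length),
      (M.rotate (M.idxOf a + 1)).get ⟨j, hj⟩ = b :=
    ⟨_, List.idxOf_lt_length_iff.mpr hbR, List.idxOf_get _⟩
  have hjlt : j < M.length := by rw [← hRlen]; exact hjR
  have hRlast : (M.rotate (M.idxOf a + 1)).getLast hRne = a := by
    rw [rot_last _ hpos]
    have e : (M.length - 1 + (M.idxOf a + 1)) % M.length = M.idxOf a := by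
      have : M.length - 1 + (M.idxOf a + 1) = M.idxOf a + M.length := by omega
      rw [this, Nat.add_mod_right]
      exact Nat.mod_eq_of_lt hia
    rw [get_idx_congr M e]
    exact List.idxOf_get hia
  have hRhead : (M.rotate (M.idxOf a + 1)).head hRne = csucc M a := by
    rw [rot_head _ hpos, csucc_eq_get ha]
  have hlastget : (M.rotate (M.idxOf a + 1)).get
      ⟨(M.rotate (M.idxOf a + 1)).length - 1, by omega⟩ = a := by
    rw [← List.getLast_eq_get]; exact hRlast
  have hjne : j ≠ M.length - 1 := by
    intro hc
    apply hab
    calc a = (M.rotate (M.idxOf a + 1)).get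
          ⟨(M.rotate (M.idxOf a + 1)).length - 1, by omega⟩ := hlastget.symm
      _ = (M.rotate (M.idxOf a + 1)).get ⟨j, hjR⟩ :=
          (get_idx_congr _ (by omega) _).symm
      _ = b := hgetb
  have hjlt1 : j + 1 < M.length := by omega
  have hgetb2 := hgetb
  have hidxb : M.idxOf b = (j + (M.idxOf a + 1)) % M.length := by
    rw [List.get_rotate] at hgetb2
    conv_lhs => rw [← hgetb2]
    rw [List.get_idxOf hM.nodup]
  have hsuccb : (M.rotate (M.idxOf a + 1)).get ⟨j + 1, by omega⟩ = csucc M b := by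
    rw [List.get_rotate, csucc_eq_get hb]
    apply get_idx_congr
    show (j + 1 + (M.idxOf a + 1)) % M.length = (M.idxOf b + 1) % M.length
    rw [hidxb, Nat.mod_add_mod]
    congr 1
    omega
  set R := M.rotate (M.idxOf a + 1) with hRdef
  have hS1len : (R.take (j+1)).length = j+1 := by
    rw [List.length_take, hRlen]
    exact min_eq_left (by omega)
  have hS1ne : R.take (j+1) ≠ [] := by
    intro hc
    rw [hc] at hS1len
    simp at hS1len
  have hS2len : (R.drop (j+1)).length = M.length - (j+1) := by
    rw [List.length_drop, hRlen]
  have hS2ne : R.drop (j+1) ≠ [] := by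
    intro hc
    rw [hc] at hS2len
    simp at hS2len
    omega
  have hS1revne : (R.take (j+1)).reverse ≠ [] := by
    simpa using hS1ne
  -- heads and lasts
  have hS1head : (R.take (j+1)).head hS1ne = csucc M a := by
    rw [take_head hRne, hRhead]
  have hS1last : (R.take (j+1)).getLast hS1ne = b := by
    rw [take_last (by omega) (by omega)]
    exact (get_idx_congr R (show j + 1 - 1 = j by omega) _).trans hgetb
  have hS2head : (R.drop (j+1)).head hS2ne = csucc M b := by
    rw [drop_head (by omega)]
    exact hsuccb
  have hS2last : (R.drop (j+1)).getLast hS2ne = a := by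
    rw [drop_last (by omega) hRne, hRlast]
  -- nodups
  have hrevnd : ((R.take (j+1)).reverse ++ R.drop (j+1)).Nodup := by
    rw [List.nodup_append']
    have hrnd : (R.take (j+1) ++ R.drop (j+1)).Nodup := by
      rw [List.take_append_drop]; exact hRnd
    rw [List.nodup_append'] at hrnd
    refine ⟨List.nodup_reverse.mpr hrnd.1, hrnd.2.1, ?_⟩
    intro z hz hz2
    exact hrnd.2.2 (List.mem_reverse.mp hz) hz2
  refine ⟨π ++ ((R.take (j+1)).reverse ++ R.drop (j+1)), ?_, ?_⟩
  · refine ⟨?_, ?_, ?_, ?_⟩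
    · rw [List.nodup_append']
      refine ⟨hπnd, hrevnd, ?_⟩
      intro z hz hz2
      apply hdisj z hz
      rw [List.mem_append, List.mem_reverse] at hz2
      rcases hz2 with hz2 | hz2
      · exact List.mem_rotate.mp (List.mem_of_mem_take hz2)
      · exact List.mem_rotate.mp (List.mem_of_mem_drop hz2)
    · rw [List.length_append, List.length_append, List.length_reverse,
        List.length_take, List.length_drop]
      have : π.length ≥ 1 := List.length_pos_iff.mpr hπne
      omega
    · rw [List.Chain', List.isChain_append]
      refine ⟨hπch, ?_, ?_⟩
      · rw [List.isChain_append]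
        refine ⟨?_, hRcyc.chain.drop _, ?_⟩
        · rw [List.isChain_reverse]
          exact List.Chain'.imp (fun x y hxy => hxy.symm) (hRcyc.chain.take _)
        · intro x hx y hy
          rw [List.getLast?_eq_getLast hS1revne] at hx
          rw [List.head?_eq_head hS2ne] at hy
          simp only [Option.mem_def, Option.some.injEq] at hx hy
          subst hx; subst hy
          rw [List.getLast_reverse, take_head hRne, hRhead, hS2head]
          exact hchord
      · intro x hx y hy
        rw [List.getLast?_eq_getLast hπne] at hx
        rw [List.head?_eq_head (by simp [hS1revne])] at hy
        simp only [Option.mem_def, Option.some.injEq] at hx hy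
        subst hx; subst hy
        rw [List.head_append, dif_neg]
        swap
        · simpa using hS1revne
        rw [List.head_reverse, hS1last]
        exact h2
    · intro h
      rw [List.getLast_append' _ _ (by simp [hS2ne] : (R.take (j+1)).reverse ++ R.drop (j+1) ≠ [])]
      rw [List.getLast_append' _ _ hS2ne, hS2last]
      rw [List.head_append, dif_neg (by simpa using hπne)]
      exact h1
  · intro z
    rw [List.mem_append, List.mem_append, List.mem_reverse]
    constructor
    · rintro (hz | hz | hz)
      · right; exact hz
      · left; exact List.mem_rotate.mp (List.mem_of_mem_take hz)
      · left; exact List.mem_rotate.mp (List.mem_of_mem_drop hz)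
    · rintro (hz | hz)
      · have : z ∈ R := List.mem_rotate.mpr hz
        rw [← List.take_append_drop (j+1) R, List.mem_append] at this
        tauto
      · left; exact hz

end ClaimAux
end P5
section P6
open SimpleGraph
namespace ClaimAux

lemma head_eq_of_cons {α : Type*} {l : List α} {a : α} {tl : List α}
    (e : l = a :: tl) (h : l ≠ []) : l.head h = a := by subst e; rfl

lemma isolated_reachable {W : Type*} {H : SimpleGraph W} {x y : W}
    (hiso : ∀ z, ¬ H.Adj x z) (h : H.Reachable x y) : x = y := by
  obtain ⟨w⟩ := h
  cases w with
  | nil => rfl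
  | cons h' p => exact absurd h' (hiso _)

lemma support_getLast {W : Type*} {H : SimpleGraph W} {a b : W} (p : H.Walk a b)
    (h : p.support ≠ []) : p.support.getLast h = b := by
  induction p with
  | nil => rfl
  | cons h' q ih =>
    exact (List.getLast_cons (l := q.support) q.support_ne_nil).trans (ih _)

lemma reachable_of_mem_support {W : Type*} {H : SimpleGraph W} {a b : W} (p : H.Walk a b)
    {z : W} (hz : z ∈ p.support) : H.Reachable a z := by
  induction p with
  | nil => simp at hz; subst hz; rfl
  | cons h' q ih =>
    rw [Walk.support_cons, List.mem_cons] at hz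
    rcases hz with hz | hz
    · subst hz; rfl
    · exact (Adj.reachable h').trans (ih hz)

variable {V : Type*} [Fintype V] [DecidableEq V] {G : SimpleGraph V}

/-- Counting components from below: an isolated set `B` plus a nonempty rest `A`. -/
lemma numComp_lower (G : SimpleGraph V) (S A B : Finset V)
    (hA : A.Nonempty) (hdisj : ∀ z ∈ A, z ∉ B)
    (hSc : ∀ z : V, z ∉ S ↔ (z ∈ A ∨ z ∈ B))
    (hBiso : ∀ b ∈ B, ∀ z : V, G.Adj b z → z ∈ S) :
    B.card + 1 ≤ numComp G ↑S := by
  classical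
  obtain ⟨a₀, ha₀⟩ := hA
  have ha₀' : a₀ ∈ ((↑S : Set V)ᶜ) := by
    simpa using (hSc a₀).mpr (Or.inl ha₀)
  have hbmem : ∀ b ∈ B, b ∈ ((↑S : Set V)ᶜ) := by
    intro b hb
    simpa using (hSc b).mpr (Or.inr hb)
  set H := G.induce ((↑S : Set V)ᶜ) with hH
  have hiso : ∀ (b : V) (hb : b ∈ B), ∀ z, ¬ H.Adj ⟨b, hbmem b hb⟩ z := by
    rintro b hb ⟨z, hz⟩ hadj
    have hGadj : G.Adj b z := hadj
    have := hBiso b hb z hGadj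
    simp only [Set.mem_compl_iff, Finset.mem_coe] at hz
    exact hz this
  let f : Option {x // x ∈ B} → H.ConnectedComponent := fun o =>
    match o with
    | none => H.connectedComponentMk ⟨a₀, ha₀'⟩
    | some ⟨b, hb⟩ => H.connectedComponentMk ⟨b, hbmem b hb⟩
  have hinj : Function.Injective f := by
    intro o1 o2 he
    match o1, o2 with
    | none, none => rfl
    | none, some ⟨b, hb⟩ =>
      exfalso
      have hre := ConnectedComponent.exact he.symm
      have := isolated_reachable (hiso b hb) hre
      have : b = a₀ := congrArg Subtype.val this
      subst this
      exact hdisj b ha₀ hb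
    | some ⟨b, hb⟩, none =>
      exfalso
      have hre := ConnectedComponent.exact he
      have := isolated_reachable (hiso b hb) hre
      have : b = a₀ := congrArg Subtype.val this
      subst this
      exact hdisj b ha₀ hb
    | some ⟨b, hb⟩, some ⟨b', hb'⟩ =>
      have hre := ConnectedComponent.exact he
      have := isolated_reachable (hiso b hb) hre
      have : b = b' := congrArg Subtype.val this
      subst this
      rfl
  have hcard := Nat.card_le_card_of_injective f hinj
  have e1 : Nat.card (Option {x // x ∈ B}) = B.card + 1 := by
    rw [Nat.card_eq_fintype_card, Fintype.card_option, Fintype.card_coe]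
  rw [e1] at hcard
  exact hcard

/-- Extract a simple path (as a list in `V`) within an induced subgraph. -/
lemma comp_path {s : Set V} {x y : V} (hx : x ∈ s) (hy : y ∈ s)
    (hreach : (G.induce s).Reachable ⟨x, hx⟩ ⟨y, hy⟩) :
    ∃ (π : List V) (hne : π ≠ []), π.Nodup ∧ π.Chain' G.Adj ∧
      π.head hne = x ∧ π.getLast hne = y ∧
      ∀ z ∈ π, ∃ hz : z ∈ s, (G.induce s).Reachable ⟨x, hx⟩ ⟨z, hz⟩ := by
  obtain ⟨w⟩ := hreach
  let p : (G.induce s).Walk ⟨x, hx⟩ ⟨y, hy⟩ := w.toPath.val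
  have hnd : p.support.Nodup := w.toPath.property.support_nodup
  have hne : p.support.map Subtype.val ≠ [] := by
    intro hc
    have hlen := congrArg List.length hc
    simp only [List.length_map, List.length_nil] at hlen
    exact Walk.support_ne_nil p (List.length_eq_zero_iff.mp hlen)
  refine ⟨p.support.map Subtype.val, hne, ?_, ?_, ?_, ?_, ?_⟩
  · exact hnd.map Subtype.val_injective
  · have hch := Walk.isChain_adj_support p
    rw [List.Chain', List.isChain_map]
    refine hch.imp ?_
    intro a b hab
    exact hab
  · have e2 : List.map Subtype.val p.support = x :: List.map Subtype.val p.support.tail := by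
      conv_lhs => rw [p.support_eq_cons]
      rfl
    exact head_eq_of_cons e2 hne
  · have e : (p.support.map Subtype.val).getLast hne =
        Subtype.val (p.support.getLast (Walk.support_ne_nil _)) := by
      rw [List.getLast_map]
    rw [e, support_getLast]
  · intro z hz
    rw [List.mem_map] at hz
    obtain ⟨⟨z', hz'⟩, hmem, rfl⟩ := hz
    exact ⟨hz', reachable_of_mem_support _ hmem⟩

end ClaimAux
end P6
section P7
open SimpleGraph
namespace ClaimAux
variable {V : Type*} [Fintype V] [DecidableEq V] {G : SimpleGraph V}

lemma absorb (t : ℝ) (ht : 1 < t) (htough : Tough t G)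
    (SP Hset HR : Set V) (hH : ∀ z, z ∈ Hset ↔ z ∉ SP) (hHR : HR ⊆ Hset)
    (h₀ : V) (hh₀ : h₀ ∈ Hset) (hh₀R : h₀ ∉ HR)
    (lam : ℕ) (hlam : lam = Nat.card Hset)
    (hnoD : ∀ (w : V) (c' : G.Walk w w), ¬ IsDCycle G lam c')
    (hdeg' : ∀ x ∈ SP, (∀ h' ∈ Hset, ¬ G.Adj x h') →
      (Fintype.card V : ℝ) / (t + 1) + t - 1 < (Nat.card {y' : V | y' ∈ SP ∧ G.Adj x y'} : ℝ)) :
    ∀ (N : ℕ) (Y : Finset V) (M : List V), Y.card ≤ N →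
      ((Y.card : ℝ) < t + 2) →
      CycL G M → (∀ z, z ∉ M ↔ (z ∈ Y ∨ z ∈ HR)) →
      (∀ z ∈ Y, z ∈ SP ∧ ∀ h' ∈ Hset, ¬ G.Adj z h') → False := by
  classical
  have ht0 : (0:ℝ) < t + 1 := by linarith
  -- the terminal case
  have hfinale : ∀ (M : List V), CycL G M → (∀ z, z ∉ M ↔ z ∈ HR) → False := by
    intro M hM hcomp
    obtain ⟨x₀, wk, hwk, hsupp⟩ := hM.exists_cycle
    refine hnoD x₀ wk ⟨hwk, ?_⟩
    intro K
    have hseteq : {x : V | x ∉ wk.support} = HR := by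
      ext z
      simp only [Set.mem_setOf_eq]
      rw [← hcomp z]
      constructor
      · intro h hz; exact h ((hsupp z).mpr hz)
      · intro h hz; exact h ((hsupp z).mp hz)
    have h1 : Nat.card K.supp ≤ Nat.card {x : V | x ∉ wk.support} :=
      Nat.card_le_card_of_injective (fun z => z.1) (fun z1 z2 h => Subtype.ext h)
    have h2 : Nat.card {x : V | x ∉ wk.support} = ({x : V | x ∉ wk.support} : Set V).ncard :=
      Nat.card_coe_set_eq _
    have h3 : ({x : V | x ∉ wk.support} : Set V).ncard < lam := by
      rw [hseteq, hlam]
      have hsub : HR ⊂ Hset := ⟨hHR, fun hcon => hh₀R (hcon hh₀)⟩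
      have := Set.ncard_lt_ncard hsub (Set.toFinite Hset)
      rw [Nat.card_coe_set_eq]
      exact this
    omega
  -- the key induction
  intro N
  induction N with
  | zero =>
    intro Y M hcard hYt hM hcomp hYprop
    have hY : Y = ∅ := Finset.card_eq_zero.mp (by omega)
    subst hY
    refine hfinale M hM ?_
    intro z
    rw [hcomp z]
    simp
  | succ N ih =>
    intro Y M hcard hYt hM hcomp hYprop
    rcases Y.eq_empty_or_nonempty with hY | ⟨y, hyY⟩
    · subst hY
      refine hfinale M hM ?_
      intro z
      rw [hcomp z]
      simp
    -- setup
    have hMne : M ≠ [] := hM.ne_nil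
    have hySP : y ∈ SP := (hYprop y hyY).1
    have hyH : ∀ h' ∈ Hset, ¬ G.Adj y h' := (hYprop y hyY).2
    have hyYs : y ∈ (↑Y : Set V) := by simpa using hyY
    -- the component of y in the induced graph on Y
    set σ : Set V := {z | ∃ hz : z ∈ (↑Y : Set V),
        (G.induce (↑Y : Set V)).Reachable ⟨y, hyYs⟩ ⟨z, hz⟩} with hσdef
    have hyσ : y ∈ σ := ⟨hyYs, Reachable.refl _⟩
    have hσY : ∀ z ∈ σ, z ∈ Y := by
      rintro z ⟨hz, -⟩
      simpa using hz
    have hσclose : ∀ z ∈ σ, ∀ z', z' ∈ Y → G.Adj z z' → z' ∈ σ := by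
      rintro z ⟨hz, hre⟩ z' hz' hadj
      refine ⟨by simpa using hz', hre.trans (Adj.reachable ?_)⟩
      exact hadj
    -- path within σ between any two of its members
    have hσpath : ∀ z1 ∈ σ, ∀ z2 ∈ σ, ∃ (π : List V) (hne : π ≠ []),
        π.Nodup ∧ π.Chain' G.Adj ∧ π.head hne = z1 ∧ π.getLast hne = z2 ∧
        ∀ z ∈ π, z ∈ σ := by
      rintro z1 ⟨hz1, hre1⟩ z2 ⟨hz2, hre2⟩
      obtain ⟨π, hne, hnd, hch, hh, hl, hall⟩ := comp_path hz1 hz2 (hre1.symm.trans hre2)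
      refine ⟨π, hne, hnd, hch, hh, hl, ?_⟩
      intro z hz
      obtain ⟨hzY, hrez⟩ := hall z hz
      exact ⟨hzY, hre1.trans hrez⟩
    -- σ is disjoint from M
    have hσM : ∀ z ∈ σ, z ∉ M := by
      intro z hz
      exact (hcomp z).mpr (Or.inl (hσY z hz))
    -- absorbing a path within σ yields a smaller configuration : impossible by ih
    have hshrink : ∀ (M' : List V) (π : List V) (hπne : π ≠ []), (∀ z ∈ π, z ∈ σ) →
        CycL G M' → (∀ z, z ∈ M' ↔ (z ∈ M ∨ z ∈ π)) → False := by
      intro M' π hπne hπσ hM' hmem'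
      have hy1π : π.head hπne ∈ π := List.head_mem hπne
      have hy1Y : π.head hπne ∈ Y := hσY _ (hπσ _ hy1π)
      have hss : Y \ π.toFinset ⊂ Y := by
        rw [Finset.ssubset_iff_of_subset (Finset.sdiff_subset)]
        exact ⟨π.head hπne, hy1Y, by simp [List.mem_toFinset, hy1π]⟩
      have hcardlt := Finset.card_lt_card hss
      refine ih (Y \ π.toFinset) M' (by omega) ?_ hM' ?_ ?_
      · have : (Y \ π.toFinset).card ≤ Y.card := Finset.card_le_card Finset.sdiff_subset
        have : ((Y \ π.toFinset).card : ℝ) ≤ (Y.card : ℝ) := by exact_mod_cast this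
        linarith
      · intro z
        simp only [hmem' z, not_or]
        constructor
        · rintro ⟨hzM, hzπ⟩
          rcases (hcomp z).mp hzM with hzY | hzHR
          · left
            rw [Finset.mem_sdiff]
            exact ⟨hzY, fun hc => hzπ (List.mem_toFinset.mp hc)⟩
          · right; exact hzHR
        · rintro (hz | hz)
          · rw [Finset.mem_sdiff] at hz
            exact ⟨(hcomp z).mpr (Or.inl hz.1), fun hc => hz.2 (List.mem_toFinset.mpr hc)⟩
          · refine ⟨(hcomp z).mpr (Or.inr hz), ?_⟩
            intro hzπ
            have hzY := hσY _ (hπσ _ hzπ)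
            have hzSP := (hYprop z hzY).1
            exact (hH z).mp (hHR hz) hzSP
      · intro z hz
        rw [Finset.mem_sdiff] at hz
        exact hYprop z hz.1
    -- exclusion facts in the stuck state
    have hexcl1 : ∀ a ∈ M, (∃ y1 ∈ σ, G.Adj a y1) → ∀ y2 ∈ σ, ¬ G.Adj (csucc M a) y2 := by
      rintro a haM ⟨y1, hy1σ, hadj1⟩ y2 hy2σ hadj2
      obtain ⟨π, hπne, hπnd, hπch, hπh, hπl, hπσ⟩ := hσpath y1 hy1σ y2 hy2σ
      obtain ⟨M', hM', hmem'⟩ := hM.surgeryI haM π hπne hπnd hπch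
        (fun z hz => hσM z (hπσ z hz))
        (by rw [hπh]; exact hadj1)
        (by rw [hπl]; exact hadj2.symm)
      exact hshrink M' π hπne hπσ hM' hmem'
    have hexcl2 : ∀ a ∈ M, ∀ b ∈ M, a ≠ b → (∃ y1 ∈ σ, G.Adj a y1) →
        (∃ y2 ∈ σ, G.Adj b y2) → ¬ G.Adj (csucc M a) (csucc M b) := by
      rintro a haM b hbM hab ⟨y1, hy1σ, hadj1⟩ ⟨y2, hy2σ, hadj2⟩ hchord
      obtain ⟨π, hπne, hπnd, hπch, hπh, hπl, hπσ⟩ := hσpath y1 hy1σ y2 hy2σ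
      obtain ⟨M', hM', hmem'⟩ := hM.surgeryII haM hbM hab π hπne hπnd hπch
        (fun z hz => hσM z (hπσ z hz))
        (by rw [hπh]; exact hadj1)
        (by rw [hπl]; exact hadj2.symm)
        hchord
      exact hshrink M' π hπne hπσ hM' hmem'
    -- finsets
    set σf : Finset V := Y.filter (fun z => z ∈ σ) with hσfdef
    have hyσf : y ∈ σf := by
      rw [hσfdef, Finset.mem_filter]; exact ⟨hyY, hyσ⟩
    have hσfσ : ∀ z ∈ σf, z ∈ σ := by
      intro z hz; rw [hσfdef, Finset.mem_filter] at hz; exact hz.2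
    have hσσf : ∀ z ∈ σ, z ∈ σf := by
      intro z hz; rw [hσfdef, Finset.mem_filter]; exact ⟨hσY z hz, hz⟩
    set U : Finset V := Finset.univ.filter (fun z => z ∈ M ∧ ∃ y' ∈ σ, G.Adj z y') with hUdef
    have hUM : ∀ z ∈ U, z ∈ M := by
      intro z hz; rw [hUdef, Finset.mem_filter] at hz; exact hz.2.1
    have hUn : ∀ z ∈ U, ∃ y' ∈ σ, G.Adj z y' := by
      intro z hz; rw [hUdef, Finset.mem_filter] at hz; exact hz.2.2
    set Bf : Finset V := U.image (csucc M) with hBfdef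
    have hBfM : ∀ z ∈ Bf, z ∈ M := by
      intro z hz
      rw [hBfdef, Finset.mem_image] at hz
      obtain ⟨a, haU, rfl⟩ := hz
      exact csucc_mem (hUM a haU)
    -- isolation of Bf in the complement of S
    have hiso : ∀ b ∈ Bf, ∀ z, G.Adj b z → z ∈ (σf ∪ Bf)ᶜ := by
      intro b hb z hadj
      rw [Finset.mem_compl]
      intro hzmem
      rw [Finset.mem_union] at hzmem
      rw [hBfdef, Finset.mem_image] at hb
      obtain ⟨a, haU, rfl⟩ := hb
      rcases hzmem with hz | hz
      · exact hexcl1 a (hUM a haU) (hUn a haU) z (hσfσ z hz) hadj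
      · rw [hBfdef, Finset.mem_image] at hz
        obtain ⟨a', ha'U, rfl⟩ := hz
        by_cases he : a = a'
        · subst he
          exact G.loopless.irrefl _ hadj
        · exact hexcl2 a (hUM a haU) a' (hUM a' ha'U) he (hUn a haU) (hUn a' ha'U) hadj
    have hdisjAB : ∀ z ∈ σf, z ∉ Bf := by
      intro z hz hzB
      exact hσM z (hσfσ z hz) (hBfM z hzB)
    have hcount : Bf.card + 1 ≤ numComp G ↑((σf ∪ Bf)ᶜ) := by
      refine numComp_lower G ((σf ∪ Bf)ᶜ) σf Bf ⟨y, hyσf⟩ hdisjAB ?_ hiso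
      intro z
      rw [Finset.mem_compl, not_not, Finset.mem_union]
    have hBfcard : Bf.card = U.card := by
      rw [hBfdef]
      refine Finset.card_image_of_injOn ?_
      intro a ha b hb he
      exact csucc_injOn hM.nodup (hUM a ha) (hUM b hb) he
    -- degree set of y
    set Nf : Finset V := Finset.univ.filter (fun z => z ∈ SP ∧ G.Adj y z) with hNfdef
    have hNfsub : Nf ⊆ U ∪ (σf.erase y) := by
      intro z hz
      rw [hNfdef, Finset.mem_filter] at hz
      obtain ⟨-, hzSP, hadj⟩ := hz
      rw [Finset.mem_union]
      by_cases hzM : z ∈ M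
      · left
        rw [hUdef, Finset.mem_filter]
        exact ⟨Finset.mem_univ z, hzM, y, hyσ, hadj.symm⟩
      · right
        rcases (hcomp z).mp hzM with hzY | hzHR
        · have hzσ : z ∈ σ := hσclose y hyσ z hzY hadj
          rw [Finset.mem_erase]
          exact ⟨fun he => G.loopless.irrefl y (he ▸ hadj), hσσf z hzσ⟩
        · exact absurd hzSP ((hH z).mp (hHR hzHR))
    have hNfcard : Nf.card ≤ U.card + (σf.card - 1) := by
      calc Nf.card ≤ (U ∪ σf.erase y).card := Finset.card_le_card hNfsub
        _ ≤ U.card + (σf.erase y).card := Finset.card_union_le _ _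
        _ = U.card + (σf.card - 1) := by rw [Finset.card_erase_of_mem hyσf]
    have hDy : (Fintype.card V : ℝ) / (t + 1) + t - 1 < (Nf.card : ℝ) := by
      have hd := hdeg' y hySP hyH
      have heq : {y' : V | y' ∈ SP ∧ G.Adj y y'} = (↑Nf : Set V) := by
        ext z
        simp [hNfdef]
      rw [heq, Nat.card_coe_set_eq, Set.ncard_coe_finset] at hd
      exact hd
    -- the bound n ≥ 2t + 2
    have hn2 : 2 * t ≤ (Fintype.card V : ℝ) - 2 := by
      have hyh₀ : h₀ ≠ y := by
        intro he
        exact (hH h₀).mp hh₀ (he ▸ hySP)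
      have hisop : ∀ b ∈ ({y} : Finset V), ∀ z, G.Adj b z → z ∈ ({h₀, y} : Finset V)ᶜ := by
        intro b hb z hadj
        rw [Finset.mem_singleton] at hb
        subst hb
        rw [Finset.mem_compl]
        intro hzmem
        rw [Finset.mem_insert, Finset.mem_singleton] at hzmem
        rcases hzmem with rfl | rfl
        · exact hyH z hh₀ hadj
        · exact G.loopless.irrefl z hadj
      have hc2 : 1 + 1 ≤ numComp G ↑(({h₀, y} : Finset V)ᶜ) := by
        have := numComp_lower G (({h₀, y} : Finset V)ᶜ) {h₀} {y} ⟨h₀, by simp⟩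
          (by intro z hz; rw [Finset.mem_singleton] at hz; subst hz;
              rw [Finset.mem_singleton]; exact hyh₀)
          (by intro z; simp [Finset.mem_compl]; tauto) hisop
        simpa using this
      have htg := htough _ (by omega : 2 ≤ numComp G ↑(({h₀, y} : Finset V)ᶜ))
      have hcc : ((({h₀, y} : Finset V)ᶜ).card : ℝ) = (Fintype.card V : ℝ) - 2 := by
        rw [Finset.card_compl]
        have h2 : ({h₀, y} : Finset V).card = 2 := by
          rw [Finset.card_insert_of_notMem (by simpa using hyh₀), Finset.card_singleton]
        rw [h2]
        have : 2 ≤ Fintype.card V := by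
          have : ({h₀, y} : Finset V).card ≤ Fintype.card V := Finset.card_le_univ _
          omega
        push_cast [Nat.cast_sub this]
        ring
      rw [hcc] at htg
      have h2n : (2 : ℝ) ≤ (numComp G ↑(({h₀, y} : Finset V)ᶜ) : ℝ) := by exact_mod_cast hc2
      nlinarith
    -- bound σf.card
    have hgY : (σf.card : ℝ) < t + 2 := by
      have : σf.card ≤ Y.card := Finset.card_le_card (Finset.filter_subset _ _)
      have : (σf.card : ℝ) ≤ (Y.card : ℝ) := by exact_mod_cast this
      linarith
    have hg1 : 1 ≤ σf.card := Finset.card_pos.mpr ⟨y, hyσf⟩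
    -- two cases according to whether U is empty
    rcases Finset.eq_empty_or_nonempty U with hUe | hUne
    · -- U empty : degree too small
      have hNf2 : Nf.card ≤ σf.card - 1 := by
        have := hNfcard
        rw [hUe] at this
        simpa using this
      have hNf2R : (Nf.card : ℝ) ≤ (σf.card : ℝ) - 1 := by
        have h1 : (Nf.card : ℝ) ≤ ((σf.card - 1 : ℕ) : ℝ) := by exact_mod_cast hNf2
        have h2 : ((σf.card - 1 : ℕ) : ℝ) = (σf.card : ℝ) - 1 := by
          push_cast [Nat.cast_sub hg1]
          ring
        linarith
      have hncard : 2 ≤ (Fintype.card V : ℝ) / (t + 1) := by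
        rw [le_div_iff₀ ht0]
        linarith
      linarith
    · -- main case
      have hU1 : 1 ≤ U.card := Finset.card_pos.mpr hUne
      have h2comp : 2 ≤ numComp G ↑((σf ∪ Bf)ᶜ) := by omega
      have htg := htough _ h2comp
      have hdisj2 : Disjoint σf Bf := by
        rw [Finset.disjoint_left]
        intro z hz
        exact hdisjAB z hz
      have hsumle : σf.card + U.card ≤ Fintype.card V := by
        have : (σf ∪ Bf).card ≤ Fintype.card V := Finset.card_le_univ _
        rw [Finset.card_union_of_disjoint hdisj2, hBfcard] at this
        exact this
      have hScard : (((σf ∪ Bf)ᶜ).card : ℝ) =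
          (Fintype.card V : ℝ) - (σf.card : ℝ) - (U.card : ℝ) := by
        rw [Finset.card_compl, Finset.card_union_of_disjoint hdisj2, hBfcard]
        push_cast [Nat.cast_sub hsumle]
        ring
      have hcomp2 : ((U.card : ℝ) + 1) ≤ (numComp G ↑((σf ∪ Bf)ᶜ) : ℝ) := by
        have : U.card + 1 ≤ numComp G ↑((σf ∪ Bf)ᶜ) := by omega
        exact_mod_cast this
      have e1 : t * ((U.card : ℝ) + 1) ≤
          (Fintype.card V : ℝ) - (σf.card : ℝ) - (U.card : ℝ) := by
        have hmono : t * ((U.card : ℝ) + 1) ≤ t * (numComp G ↑((σf ∪ Bf)ᶜ) : ℝ) := by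
          apply mul_le_mul_of_nonneg_left hcomp2 (by linarith)
        calc t * ((U.card : ℝ) + 1) ≤ t * (numComp G ↑((σf ∪ Bf)ᶜ) : ℝ) := hmono
          _ ≤ (((σf ∪ Bf)ᶜ).card : ℝ) := htg
          _ = _ := hScard
      have e2 : (Nf.card : ℝ) ≤ (U.card : ℝ) + (σf.card : ℝ) - 1 := by
        have h1 : (Nf.card : ℝ) ≤ ((U.card + (σf.card - 1) : ℕ) : ℝ) := by
          exact_mod_cast hNfcard
        have h2 : ((U.card + (σf.card - 1) : ℕ) : ℝ) = (U.card : ℝ) + (σf.card : ℝ) - 1 := by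
          push_cast [Nat.cast_sub hg1]
          ring
        linarith
      have hdivn : (Fintype.card V : ℝ) / (t + 1) * (t + 1) = (Fintype.card V : ℝ) :=
        div_mul_cancel₀ _ (ne_of_gt ht0)
      have e3 : (Fintype.card V : ℝ) + (t - 1) * (t + 1) < (Nf.card : ℝ) * (t + 1) := by
        have h := mul_lt_mul_of_pos_right hDy ht0
        nlinarith [h, hdivn]
      have e4 : (σf.card : ℝ) * t < (t + 2) * t := by
        apply mul_lt_mul_of_pos_right hgY (by linarith)
      nlinarith [e1, e2, e3, e4]

end ClaimAux
end P7
section P8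
open SimpleGraph
namespace ClaimAux
variable {V : Type*} [DecidableEq V] {G : SimpleGraph V}

lemma getLast_eq_of_cons {α : Type*} {l : List α} {a : α} {tl : List α}
    (e : l = a :: tl) (htl : tl ≠ []) (h : l ≠ []) : l.getLast h = tl.getLast htl := by
  subst e; exact List.getLast_cons htl

lemma mod_helper {n i k : ℕ} (hi : i < n) (hk : k < n) :
    ((i + k) % n + (n - k)) % n = i := by
  rw [Nat.mod_add_mod]
  have e : i + k + (n - k) = i + n := by omega
  rw [e, Nat.add_mod_right, Nat.mod_eq_of_lt hi]

end ClaimAux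
end P8
open SimpleGraph ClaimAux in
/-- Claim 4: in the setting of the main proof, any two neighbours of  on the
cycle  are at cycle-distance at least  in either direction. -/
theorem neighbours_far_apart {V : Type*} [Fintype V] [DecidableEq V]
    (t : ℝ) (ht : 1 < t) (G : SimpleGraph V) (htough : Tough t G)
    (v0 : V) (c : G.Walk v0 v0) (hcyc : c.IsCycle)
    (Hset : Set V) (hHset : Hset = {x | x ∉ c.support})
    (hHne : Hset.Nonempty) (hHconn : (G.induce Hset).Connected)
    (hHcomplete : ∀ x ∈ Hset, ∀ y ∈ Hset, x ≠ y → G.Adj x y)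
    (lam : ℕ) (hlam : lam = Nat.card Hset)
    (hnoD : ∀ (w : V) (c' : G.Walk w w), ¬ IsDCycle G lam c')
    (hDc : IsDCycle G (lam + 1) c)
    (hminbig : ∀ (w : V) (c' : G.Walk w w), IsDCycle G (lam + 1) c' →
      bigComps G lam c ≤ bigComps G lam c')
    (hlongest : ∀ (w : V) (c' : G.Walk w w), IsDCycle G (lam + 1) c' →
      bigComps G lam c' = bigComps G lam c → c'.length ≤ c.length)
    (W : Set V) (hW : W = {x | x ∈ c.support ∧ ∃ y ∈ Hset, G.Adj x y})
    (hdeg : ∀ x ∈ c.support, x ∉ W →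
      (Fintype.card V : ℝ) / (t + 1) + t - 1 <
        (Nat.card {y : V | y ∈ c.support ∧ G.Adj x y} : ℝ)) :
    ∀ u ∈ W, ∀ w ∈ W, u ≠ w → t + 3 ≤ (cycDist c u w : ℝ) := by
  classical
  by_contra hgoal
  push_neg at hgoal
  obtain ⟨u₀, hu₀, w₀, hw₀, hne₀, hlt₀⟩ := hgoal
  -- membership of `Hset` restated
  have hH : ∀ z : V, z ∈ Hset ↔ z ∉ c.support := by
    intro z; rw [hHset]; rfl
  -- basic facts about the cycle
  have hn3 : 3 ≤ c.length := hcyc.three_le_length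
  have hsuplen : c.support.length = c.length + 1 := c.length_support
  set B : List V := c.support.tail with hBdef
  have hsupcons : c.support = v0 :: B := c.support_eq_cons
  have hBlen : B.length = c.length := by
    rw [hBdef, List.length_tail, hsuplen]
    omega
  have hBne : B ≠ [] := by
    intro hc
    have h0 : B.length = 0 := by rw [hc]; rfl
    omega
  have hBnd : B.Nodup := hcyc.support_nodup
  have hBlast : B.getLast hBne = v0 := by
    have h1 := support_getLast c (Walk.support_ne_nil c)
    have h2 := getLast_eq_of_cons hsupcons hBne (Walk.support_ne_nil c)
    rw [← h2]; exact h1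
  have hBchain : B.Chain' G.Adj := (Walk.isChain_adj_support c).tail
  have hadj01 : G.Adj v0 (B.head hBne) := by
    have hch := Walk.isChain_adj_support c
    rw [hsupcons] at hch
    exact (List.isChain_cons.mp hch).1 _ (List.head?_eq_head hBne)
  have hBcyc : CycL G B := by
    refine ⟨hBnd, by omega, hBchain, ?_⟩
    intro h
    rw [show B.getLast h = v0 from hBlast]
    exact hadj01
  have hmemB : ∀ z, z ∈ B ↔ z ∈ c.support := by
    intro z
    rw [hsupcons, List.mem_cons]
    constructor
    · intro h; exact Or.inr h
    · rintro (rfl | h)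
      · rw [← hBlast]; exact List.getLast_mem hBne
      · exact h
  -- index bookkeeping
  have hidxS : ∀ z, c.support.idxOf z = if z = v0 then 0 else B.idxOf z + 1 := by
    intro z
    rw [hsupcons]
    by_cases hz : z = v0
    · rw [if_pos hz, hz, List.idxOf_cons_self]
    · rw [if_neg hz, List.idxOf_cons_ne _ (Ne.symm hz)]
  have hidxv0 : B.idxOf v0 = B.length - 1 := by
    have hget : B.get ⟨B.length - 1, by omega⟩ = v0 := by
      rw [← List.getLast_eq_get]; exact hBlast
    conv_lhs => rw [← hget]
    rw [List.get_idxOf hBnd]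
  -- the distance function via B
  have hbridge : ∀ x ∈ B, ∀ y ∈ B,
      cycDist c x y = (B.idxOf y + B.length - B.idxOf x) % B.length := by
    intro x hx y hy
    have hxlt : B.idxOf x < B.length := List.idxOf_lt_length_iff.mpr hx
    have hylt : B.idxOf y < B.length := List.idxOf_lt_length_iff.mpr hy
    show (c.support.idxOf y + c.length - c.support.idxOf x) % c.length = _
    rw [hidxS x, hidxS y, ← hBlen]
    by_cases hxv : x = v0
    · rw [if_pos hxv]
      by_cases hyv : y = v0
      · rw [if_pos hyv, hxv, hyv, hidxv0]
        have e1 : 0 + B.length - 0 = B.length := by omega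
        have e2 : B.length - 1 + B.length - (B.length - 1) = B.length := by omega
        rw [e1, e2]
      · rw [if_neg hyv, hxv, hidxv0]
        have e1 : B.idxOf y + 1 + B.length - 0 = B.idxOf y + 1 + B.length := by omega
        have e2 : B.idxOf y + B.length - (B.length - 1) = B.idxOf y + 1 := by omega
        rw [e1, e2, Nat.add_mod_right]
    · rw [if_neg hxv]
      by_cases hyv : y = v0
      · rw [if_pos hyv, hyv, hidxv0]
        have e1 : 0 + B.length - (B.idxOf x + 1) = B.length - B.idxOf x - 1 := by omega
        have e2 : B.length - 1 + B.length - B.idxOf x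
            = (B.length - B.idxOf x - 1) + B.length := by omega
        rw [e1, e2, Nat.add_mod_right]
      · rw [if_neg hyv]
        have e : B.idxOf y + 1 + B.length - (B.idxOf x + 1)
            = B.idxOf y + B.length - B.idxOf x := by omega
        rw [e]
  -- choose a minimal bad pair
  set dSet : Set ℕ := {k | ∃ a b : V, a ∈ W ∧ b ∈ W ∧ a ≠ b ∧ ((k : ℝ) < t + 3) ∧
      cycDist c a b = k} with hdSet
  have hdne : dSet.Nonempty := ⟨cycDist c u₀ w₀, u₀, w₀, hu₀, hw₀, hne₀, hlt₀, rfl⟩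
  obtain ⟨u, v, huW, hvW, huv, hdlt, hdval⟩ := Nat.sInf_mem hdne
  set d : ℕ := sInf dSet with hddef
  have hmin : ∀ k ∈ dSet, d ≤ k := fun k hk => Nat.sInf_le hk
  -- facts about u and v
  have huW' := huW
  have hvW' := hvW
  rw [hW, Set.mem_setOf_eq] at huW' hvW'
  obtain ⟨huS, h_u, hh_u, hadj_u⟩ := huW'
  obtain ⟨hvS, h_v, hh_v, hadj_v⟩ := hvW'
  have hu_B : u ∈ B := (hmemB u).mpr huS
  have hv_B : v ∈ B := (hmemB v).mpr hvS
  have hult : B.idxOf u < B.length := List.idxOf_lt_length_iff.mpr hu_B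
  have hvlt : B.idxOf v < B.length := List.idxOf_lt_length_iff.mpr hv_B
  have hd_eq : d = (B.idxOf v + B.length - B.idxOf u) % B.length := by
    rw [← hdval]; exact hbridge u hu_B v hv_B
  have hBpos : 0 < B.length := by omega
  have hd_lt : d < B.length := by
    rw [hd_eq]; exact Nat.mod_lt _ hBpos
  have hduu : cycDist c u u = 0 := by
    rw [hbridge u hu_B u hu_B]
    have e : B.idxOf u + B.length - B.idxOf u = B.length := by omega
    rw [e, Nat.mod_self]
  have hd_pos : 0 < d := by
    rcases Nat.eq_zero_or_pos d with h0 | h0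
    · exfalso
      have hdvd : B.length ∣ (B.idxOf v + B.length - B.idxOf u) :=
        Nat.dvd_of_mod_eq_zero (by rw [← hd_eq]; exact h0)
      obtain ⟨k, hk⟩ := hdvd
      have hiv : B.idxOf u = B.idxOf v := by
        rcases k with _ | k
        · omega
        · rcases k with _ | k
          · omega
          · exfalso
            have h2n : B.length * 2 ≤ B.length * (k + 1 + 1) :=
              Nat.mul_le_mul_left _ (by omega)
            omega
      apply huv
      have e1 := List.idxOf_get hult
      have e2 := List.idxOf_get hvlt
      rw [← e1, ← e2]
      exact get_idx_congr B hiv _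
    · exact h0
  -- the rotated list starting at u
  set iu : ℕ := B.idxOf u with hiudef
  set B' : List V := B.rotate iu with hB'def
  have hB'cyc : CycL G B' := hBcyc.rotate iu
  have hB'len : B'.length = B.length := List.length_rotate _ _
  have hB'ne : B' ≠ [] := rotate_ne_nil _ hBne
  have hB'nd : B'.Nodup := hB'cyc.nodup
  have hmemB' : ∀ z, z ∈ B' ↔ z ∈ B := fun z => List.mem_rotate
  have rotget : ∀ (i : ℕ) (h2 : i < B'.length),
      B'.get ⟨i, h2⟩ = B.get ⟨(i + iu) % B.length, Nat.mod_lt _ hBpos⟩ := by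
    intro i h2
    exact List.get_rotate B iu ⟨i, h2⟩
  have hget0 : B'.get ⟨0, by omega⟩ = u := by
    refine (rotget 0 (by omega)).trans ?_
    refine (get_idx_congr B (show (0 + iu) % B.length = iu by
      rw [Nat.zero_add, Nat.mod_eq_of_lt hult]) _).trans ?_
    exact List.idxOf_get hult
  have hgetd : B'.get ⟨d, by omega⟩ = v := by
    refine (rotget d (by omega)).trans ?_
    refine (get_idx_congr B (show (d + iu) % B.length = B.idxOf v by
      rw [hd_eq, Nat.mod_add_mod]
      have e2 : B.idxOf v + B.length - iu + iu = B.idxOf v + B.length := by omega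
      rw [e2, Nat.add_mod_right, Nat.mod_eq_of_lt hvlt]) _).trans ?_
    exact List.idxOf_get hvlt
  -- distance along the arc
  have harc : ∀ (i : ℕ) (hi : i < B.length), 0 < i →
      cycDist c u (B'.get ⟨i, by omega⟩) = i := by
    intro i hi hipos
    have hzB : B'.get ⟨i, by omega⟩ ∈ B := (hmemB' _).mp (List.get_mem _ _)
    have hidxz : B.idxOf (B'.get ⟨i, by omega⟩) = (i + iu) % B.length := by
      refine (congrArg (fun z => B.idxOf z) (rotget i (by omega))).trans ?_
      exact List.get_idxOf hBnd _
    rw [hbridge u hu_B _ hzB, hidxz]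
    have e : (i + iu) % B.length + B.length - iu = (i + iu) % B.length + (B.length - iu) := by
      omega
    rw [e]
    exact mod_helper hi hult
  -- the interior of the arc
  set Xl : List V := (B'.drop 1).take (d - 1) with hXldef
  have hXlen : Xl.length = d - 1 := by
    rw [hXldef, List.length_take, List.length_drop]
    omega
  have hXmem : ∀ x ∈ Xl, ∃ (i : ℕ) (hi : i < B.length), 0 < i ∧ i < d ∧
      x = B'.get ⟨i, by omega⟩ := by
    intro x hx
    obtain ⟨⟨i, hi⟩, hget⟩ := List.mem_iff_get.mp hx
    have hi' : i < d - 1 := by rw [hXlen] at hi; exact hi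
    have hdrlen : i < (B'.drop 1).length := by rw [List.length_drop]; omega
    refine ⟨i + 1, by omega, by omega, by omega, ?_⟩
    have e1 : Xl.get ⟨i, hi⟩ = (B'.drop 1).get ⟨i, hdrlen⟩ :=
      (List.get_take _ hdrlen hi').symm
    have e2 : (B'.drop 1).get ⟨i, hdrlen⟩ = B'.get ⟨1 + i, by omega⟩ :=
      (List.get_drop B' (by omega)).symm
    rw [← hget]
    refine (e1.trans e2).trans ?_
    exact get_idx_congr B' (by omega) _
  have hXdist : ∀ x ∈ Xl, 0 < cycDist c u x ∧ cycDist c u x < d := by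
    intro x hx
    obtain ⟨i, hi, hipos, hid, rfl⟩ := hXmem x hx
    rw [harc i hi hipos]
    exact ⟨hipos, hid⟩
  have hXB : ∀ x ∈ Xl, x ∈ B := by
    intro x hx
    obtain ⟨i, hi, hipos, hid, rfl⟩ := hXmem x hx
    exact (hmemB' _).mp (List.get_mem _ _)
  have hXS : ∀ x ∈ Xl, x ∈ c.support := fun x hx => (hmemB x).mp (hXB x hx)
  have hXnW : ∀ x ∈ Xl, x ∉ W := by
    intro x hx hxW
    obtain ⟨h1, h2⟩ := hXdist x hx
    have hxu : u ≠ x := by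
      intro he
      rw [← he, hduu] at h1
      omega
    have hk : cycDist c u x ∈ dSet := by
      refine ⟨u, x, huW, hxW, hxu, ?_, rfl⟩
      have h4 : cycDist c u x ≤ d - 1 := by omega
      have h3 : ((d - 1 : ℕ) : ℝ) = (d : ℝ) - 1 := by
        push_cast [Nat.cast_sub hd_pos]
        ring
      have h5 : (cycDist c u x : ℝ) ≤ ((d - 1 : ℕ) : ℝ) := by exact_mod_cast h4
      rw [h3] at h5
      linarith
    have := hmin _ hk
    omega
  have hXnH : ∀ x ∈ Xl, ∀ h' ∈ Hset, ¬ G.Adj x h' := by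
    intro x hx h' hh' hadj
    exact hXnW x hx (by rw [hW]; exact ⟨hXS x hx, h', hh', hadj⟩)
  have hXnd : Xl.Nodup := by
    refine List.Nodup.sublist ?_ hB'nd
    rw [hXldef]
    exact (List.take_sublist _ _).trans (List.drop_sublist _ _)
  have hunotX : u ∉ Xl := by
    intro hc
    obtain ⟨h1, -⟩ := hXdist u hc
    rw [hduu] at h1
    omega
  -- decomposition of B'
  have take_one_eq : ∀ (l : List V) (h : 0 < l.length), l.take 1 = [l.get ⟨0, h⟩] := by
    intro l h
    rcases l with _ | ⟨a, tl⟩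
    · simp at h
    · rfl
  have htake1 : B'.take 1 = [u] := by
    rw [take_one_eq B' (by omega)]
    rw [hget0]
  have htake : B'.take d = u :: Xl := by
    have e : B'.take d = B'.take (1 + (d - 1)) := by
      congr 1
      omega
    rw [e, List.take_add, htake1]
    rfl
  have hdisjTD : ∀ z ∈ B'.take d, z ∉ B'.drop d := by
    have hnd2 := hB'nd
    rw [← List.take_append_drop d B', List.nodup_append'] at hnd2
    exact hnd2.2.2
  have hB'part : ∀ z, z ∈ B' ↔ (z = u ∨ z ∈ Xl ∨ z ∈ B'.drop d) := by
    intro z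
    conv_lhs => rw [← List.take_append_drop d B']
    rw [List.mem_append, htake, List.mem_cons]
    tauto
  -- the path through H
  obtain ⟨π₀, hπ₀ne, hπ₀nd, hπ₀ch, hπ₀h, hπ₀l, hπ₀H⟩ :
      ∃ (π₀ : List V) (hne : π₀ ≠ []), π₀.Nodup ∧ π₀.Chain' G.Adj ∧
        π₀.head hne = h_u ∧ π₀.getLast hne = h_v ∧ ∀ z ∈ π₀, z ∈ Hset := by
    by_cases he : h_u = h_v
    · refine ⟨[h_u], by simp, by simp, List.isChain_singleton _, rfl, he, ?_⟩
      intro z hz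
      simp only [List.mem_singleton] at hz
      subst hz
      exact hh_u
    · refine ⟨[h_u, h_v], by simp, by simp [he], ?_, rfl, rfl, ?_⟩
      · rw [List.Chain', List.isChain_cons_cons]
        exact ⟨hHcomplete h_u hh_u h_v hh_v he, List.isChain_singleton _⟩
      · intro z hz
        simp only [List.mem_cons, List.mem_singleton] at hz
        rcases hz with rfl | rfl | hz
        · exact hh_u
        · exact hh_v
        · simp at hz
  have hπ₀S : ∀ z ∈ π₀, z ∉ c.support := fun z hz => (hH z).mp (hπ₀H z hz)
  have hhuπ : h_u ∈ π₀ := by rw [← hπ₀h]; exact List.head_mem hπ₀ne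
  -- the rest of the rotated cycle
  have hdropne : B'.drop d ≠ [] := by
    intro hc
    have h0 : (B'.drop d).length = 0 := by rw [hc]; rfl
    rw [List.length_drop] at h0
    omega
  have hdrophead : (B'.drop d).head hdropne = v := by
    refine (drop_head (l := B') (by omega) _).trans ?_
    exact hgetd
  have hdroplast : (B'.drop d).getLast hdropne = B'.getLast hB'ne :=
    drop_last (by omega) hB'ne _
  have hdropsub : ∀ z ∈ B'.drop d, z ∈ B := fun z hz =>
    (hmemB' z).mp (List.mem_of_mem_drop hz)
  have hdropnd : (B'.drop d).Nodup := List.Nodup.sublist (List.drop_sublist _ _) hB'nd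
  -- the new cycle M₀
  set M₀ : List V := (u :: π₀) ++ B'.drop d with hM₀def
  have hM₀mem : ∀ z, z ∈ M₀ ↔ (z = u ∨ z ∈ π₀ ∨ z ∈ B'.drop d) := by
    intro z
    rw [hM₀def]
    simp [List.mem_cons, List.mem_append]
  have huInTake : u ∈ B'.take d := by rw [htake]; exact List.mem_cons_self
  have hM₀cyc : CycL G M₀ := by
    refine ⟨?_, ?_, ?_, ?_⟩
    · rw [hM₀def, List.nodup_append']
      refine ⟨?_, hdropnd, ?_⟩
      · rw [List.nodup_cons]
        exact ⟨fun hc => (hH u).mp (hπ₀H u hc) huS, hπ₀nd⟩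
      · intro z hz hz2
        rw [List.mem_cons] at hz
        rcases hz with rfl | hz
        · exact hdisjTD z huInTake hz2
        · exact hπ₀S z hz ((hmemB z).mp (hdropsub z hz2))
    · rw [hM₀def]
      have h1 : 1 ≤ π₀.length := List.length_pos_iff.mpr hπ₀ne
      have h2 : 1 ≤ (B'.drop d).length := List.length_pos_iff.mpr hdropne
      simp only [List.length_append, List.length_cons]
      omega
    · rw [hM₀def, List.Chain', List.isChain_append]
      refine ⟨?_, hB'cyc.chain.drop _, ?_⟩
      · rw [List.isChain_cons]
        refine ⟨?_, hπ₀ch⟩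
        intro y' hy'
        rw [List.head?_eq_head hπ₀ne] at hy'
        simp only [Option.mem_def, Option.some.injEq] at hy'
        subst hy'
        rw [hπ₀h]
        exact hadj_u
      · intro x hx y' hy'
        rw [List.getLast?_eq_getLast (by simp : (u :: π₀) ≠ [])] at hx
        rw [List.head?_eq_head hdropne] at hy'
        simp only [Option.mem_def, Option.some.injEq] at hx hy'
        subst hx; subst hy'
        rw [getLast_eq_of_cons rfl hπ₀ne, hπ₀l, hdrophead]
        exact hadj_v.symm
    · intro h
      have e1 : M₀.getLast h = (B'.drop d).getLast hdropne :=
        List.getLast_append' _ _ hdropne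
      rw [e1, hdroplast]
      have e2 : M₀.head h = u := head_eq_of_cons rfl h
      rw [e2]
      have hwrap := hB'cyc.wrap hB'ne
      have hh : B'.head hB'ne = u := by
        rw [head_eq_get]; exact hget0
      rw [hh] at hwrap
      exact hwrap
  -- complement of M₀
  have hcompM₀ : ∀ z, z ∉ M₀ ↔ (z ∈ Xl.toFinset ∨ z ∈ ({z | z ∈ Hset ∧ z ∉ π₀} : Set V)) := by
    intro z
    constructor
    · intro hz
      have hzu : z ≠ u := fun hc => hz ((hM₀mem z).mpr (Or.inl hc))
      have hzπ : z ∉ π₀ := fun hc => hz ((hM₀mem z).mpr (Or.inr (Or.inl hc)))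
      have hzd : z ∉ B'.drop d := fun hc => hz ((hM₀mem z).mpr (Or.inr (Or.inr hc)))
      by_cases hzS : z ∈ c.support
      · left
        have hzB' : z ∈ B' := (hmemB' z).mpr ((hmemB z).mpr hzS)
        rcases (hB'part z).mp hzB' with rfl | hzX | hzd'
        · exact absurd rfl hzu
        · rw [List.mem_toFinset]; exact hzX
        · exact absurd hzd' hzd
      · right
        exact ⟨(hH z).mpr hzS, hzπ⟩
    · rintro (hz | ⟨hzH, hzπ⟩) hzM
      · rw [List.mem_toFinset] at hz
        rcases (hM₀mem z).mp hzM with rfl | hzπ' | hzd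
        · exact hunotX hz
        · exact (hH z).mp (hπ₀H z hzπ') (hXS z hz)
        · exact hdisjTD z (by rw [htake]; exact List.mem_cons_of_mem _ hz) hzd
      · rcases (hM₀mem z).mp hzM with hzu' | hzπ' | hzd
        · rw [hzu'] at hzH
          exact (hH u).mp hzH huS
        · exact hzπ hzπ'
        · exact (hH z).mp hzH ((hmemB z).mp (hdropsub z hzd))
  -- conclude with the absorption lemma
  have hXcard : (Xl.toFinset.card : ℝ) < t + 2 := by
    have h1 : Xl.toFinset.card = d - 1 := by
      rw [List.toFinset_card_of_nodup hXnd, hXlen]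
    rw [h1]
    have h3 : ((d - 1 : ℕ) : ℝ) = (d : ℝ) - 1 := by
      push_cast [Nat.cast_sub hd_pos]
      ring
    rw [h3]
    linarith
  refine absorb t ht htough {x | x ∈ c.support} Hset ({z | z ∈ Hset ∧ z ∉ π₀} : Set V)
      (fun z => hH z) (fun z hz => hz.1)
      h_u hh_u (fun hc => hc.2 hhuπ)
      lam hlam hnoD
      ?_
      Xl.toFinset.card Xl.toFinset M₀ le_rfl hXcard hM₀cyc hcompM₀ ?_
  · intro x hxS hxH
    have hxW : x ∉ W := by
      rw [hW]
      rintro ⟨-, h', hh', hadj⟩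
      exact hxH h' hh' hadj
    exact hdeg x hxS hxW
  · intro z hz
    rw [List.mem_toFinset] at hz
    exact ⟨hXS z hz, hXnH z hz⟩
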